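/- arXiv:2503.02473 — 3 statements merged into one kernel-verified Lean document; each statement's English description precedes it below -/
import Mathlib

section
/- Under the hypotheses H1 and H2' below, the maximum of the n-th row converges in distribution: for every x > 0, P( max_{1≤j≤n} X_{n,j} ≤ x ) = ∏_{j=1}^n P_{n,j}((0,x]) → exp( − γ([x,∞)) ) as n → ∞. -/
open MeasureTheory Filter

lemma log_one_sub_bound {q : ℝ} (h0 : 0 ≤ q) (h : q ≤ 1/2) :
    |Real.log (1 - q) + q| ≤ 2 * q ^ 2 := by
  have habs : |q| < 1 := by rw [abs_of_nonneg h0]; linarith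
  have := Real.abs_log_sub_add_sum_range_le habs 1
  simp only [Finset.sum_range_one, pow_one, Nat.cast_zero, zero_add, div_one] at this
  rw [abs_of_nonneg h0] at this
  norm_num at this
  rw [add_comm]
  refine this.trans ?_
  rw [div_le_iff₀ (by linarith)]
  nlinarith [sq_nonneg q]

lemma aux_prod_tendsto (q : ℕ → ℕ → ℝ) (g : ℝ) (hg : 0 ≤ g)
    (hq0 : ∀ n, ∀ j ∈ Finset.Icc 1 n, 0 ≤ q n j)
    (hsum : Tendsto (fun n => ∑ j ∈ Finset.Icc 1 n, q n j) atTop (nhds g))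
    (hsmall : ∀ δ : ℝ, 0 < δ → ∀ᶠ n in atTop, ∀ j ∈ Finset.Icc 1 n, q n j ≤ δ) :
    Tendsto (fun n => ∏ j ∈ Finset.Icc 1 n, (1 - q n j)) atTop
      (nhds (Real.exp (-g))) := by
  set L : ℕ → ℝ := fun n => ∑ j ∈ Finset.Icc 1 n, Real.log (1 - q n j) with hL
  -- Step A: L n + ∑ q n j → 0
  have stepA : Tendsto (fun n => L n + ∑ j ∈ Finset.Icc 1 n, q n j) atTop (nhds 0) := by
    rw [NormedAddCommGroup.tendsto_nhds_zero]
    intro ε hε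
    have hε' : 0 < min (1/2) (ε / (2 * (g + 2))) := by positivity
    have h1 := hsmall _ hε'
    have h2 : ∀ᶠ n in atTop, ∑ j ∈ Finset.Icc 1 n, q n j < g + 1 := by
      have := hsum (IsOpen.mem_nhds isOpen_Iio (by simp : g ∈ Set.Iio (g+1)))
      simpa using this
    filter_upwards [h1, h2] with n hn1 hn2
    have key : ‖L n + ∑ j ∈ Finset.Icc 1 n, q n j‖
        ≤ ∑ j ∈ Finset.Icc 1 n, 2 * q n j ^ 2 := by
      rw [hL, ← Finset.sum_add_distrib, Real.norm_eq_abs]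
      refine (Finset.abs_sum_le_sum_abs _ _).trans (Finset.sum_le_sum ?_)
      intro j hj
      exact log_one_sub_bound (hq0 n j hj) ((hn1 j hj).trans (min_le_left _ _))
    have key2 : ∑ j ∈ Finset.Icc 1 n, 2 * q n j ^ 2
        ≤ 2 * (ε / (2 * (g + 2))) * ∑ j ∈ Finset.Icc 1 n, q n j := by
      rw [Finset.mul_sum]
      refine Finset.sum_le_sum fun j hj => ?_
      have h0 := hq0 n j hj
      have hle : q n j ≤ ε / (2 * (g + 2)) := (hn1 j hj).trans (min_le_right _ _)
      nlinarith
    have hsq : 0 ≤ ∑ j ∈ Finset.Icc 1 n, q n j := Finset.sum_nonneg (hq0 n)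
    have : 2 * (ε / (2 * (g + 2))) * ∑ j ∈ Finset.Icc 1 n, q n j
        ≤ 2 * (ε / (2 * (g + 2))) * (g + 1) := by
      have : (0:ℝ) ≤ 2 * (ε / (2 * (g + 2))) := by positivity
      nlinarith
    have hlast : 2 * (ε / (2 * (g + 2))) * (g + 1) < ε := by
      rw [mul_comm, ← mul_assoc]
      rw [div_eq_mul_inv, ← mul_assoc]
      have h2g : (0:ℝ) < 2 * (g+2) := by linarith
      have : (g + 1) * 2 * ε * (2 * (g + 2))⁻¹ = ε * ((g+1)*2 / (2*(g+2))) := by ring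
      rw [this]
      have hlt : (g+1)*2 / (2*(g+2)) < 1 := by
        rw [div_lt_one h2g]; linarith
      nlinarith [mul_lt_mul_of_pos_left hlt hε]
    linarith [key.trans (key2.trans this)]
  -- Step B : L → -g
  have stepB : Tendsto L atTop (nhds (-g)) := by
    have := stepA.sub hsum
    simp only [add_sub_cancel_right] at this
    simpa using this
  -- Step C : eventually ∏ (1 - q) = exp (L n)
  have stepC : ∀ᶠ n in atTop, ∏ j ∈ Finset.Icc 1 n, (1 - q n j) = Real.exp (L n) := by
    filter_upwards [hsmall (1/2) (by norm_num)] with n hn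
    rw [hL, Real.exp_sum]
    refine Finset.prod_congr rfl fun j hj => ?_
    rw [Real.exp_log (by have := hn j hj; linarith)]
  have := (Real.continuous_exp.continuousAt.tendsto.comp stepB)
  rw [show Real.exp (-g) = Real.exp (-g) from rfl]
  exact Tendsto.congr' (stepC.mono fun n h => h.symm) this


/-- Under hypotheses H1 and H2', the maximum of the n-th row converges in
distribution: for every `x > 0`,
`P(max_{1≤j≤n} X_{n,j} ≤ x) = ∏_{j=1}^n P_{n,j}((0,x]) → exp(-γ([x,∞)))`. -/
theorem max_converges_in_distribution
    (Ω : Type*) [MeasurableSpace Ω] (Pr : Measure Ω) [IsProbabilityMeasure Pr]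
    (X : ℕ → ℕ → Ω → ℝ)
    (hXmeas : ∀ n j, 1 ≤ j → j ≤ n → Measurable (X n j))
    (hXpos : ∀ n j, 1 ≤ j → j ≤ n → ∀ ω, 0 < X n j ω)
    -- for each `n`, the variables `X n 1, …, X n n` are independent
    (hindep : ∀ n, ProbabilityTheory.iIndepFun
      (fun j : ↥(Finset.Icc 1 n) => X n j) Pr)
    -- `P n j` is the (nonatomic, supported on `(0,∞)`) distribution of `X n j`
    (P : ℕ → ℕ → Measure ℝ)
    (hPdist : ∀ n j, 1 ≤ j → j ≤ n → Measure.map (X n j) Pr = P n j)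
    (hPprob : ∀ n j, 1 ≤ j → j ≤ n → IsProbabilityMeasure (P n j))
    (hPpos : ∀ n j, 1 ≤ j → j ≤ n → P n j (Set.Iic 0) = 0)
    (hPna : ∀ n j, 1 ≤ j → j ≤ n → ∀ x : ℝ, P n j {x} = 0)
    (c : ℕ → ℕ → ℝ) (d : ℕ → ℝ)
    (hc : ∀ n j, 1 ≤ j → j ≤ n → 0 < c n j)
    (hd : ∀ n, d n = ∑ j ∈ Finset.Icc 1 n, c n j)
    -- H1 : `d n → ∞` and `(max_{j ≤ n} c n j) / d n → 0`
    (hdtop : Tendsto d atTop atTop)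
    (hmax : ∀ ε : ℝ, 0 < ε → ∃ N, ∀ n ≥ N, ∀ j ∈ Finset.Icc 1 n, c n j / d n < ε)
    -- H1 : the measures `μ_n = ∑_j (c n j / d n) δ_{j/n}` converge weakly to `μ`
    (μ : Measure ℝ)
    (hμsupp : μ ((Set.Icc (0:ℝ) 1)ᶜ) = 0)
    (hweak : ∀ f : ℝ → ℝ, Continuous f → (∃ C, ∀ x, |f x| ≤ C) →
      Tendsto (fun n => ∫ x, f x ∂(∑ j ∈ Finset.Icc 1 n,
          ENNReal.ofReal (c n j / d n) • Measure.dirac ((j : ℝ) / (n : ℝ))))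
        atTop (nhds (∫ x, f x ∂μ)))
    -- H2' : `γ` nonatomic, finite on half-lines, uniform convergence of scaled tails
    (γ : Measure ℝ)
    (hγ0 : γ (Set.Iic 0) = 0)
    (hγna : ∀ x : ℝ, 0 < x → γ {x} = 0)
    (hγfin : ∀ t : ℝ, 0 < t → γ (Set.Ici t) ≠ ⊤)
    (hunif : ∀ t : ℝ, 0 < t → ∀ ε : ℝ, 0 < ε → ∃ N, ∀ n ≥ N, ∀ j ∈ Finset.Icc 1 n,
      |d n / c n j * (P n j (Set.Ici t)).toReal - (γ (Set.Ici t)).toReal| < ε) :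
    ∀ x : ℝ, 0 < x →
      (∀ n : ℕ, (Pr {ω | ∀ j ∈ Finset.Icc 1 n, X n j ω ≤ x}).toReal
        = ∏ j ∈ Finset.Icc 1 n, (P n j (Set.Ioc 0 x)).toReal) ∧
      Tendsto (fun n => ∏ j ∈ Finset.Icc 1 n, (P n j (Set.Ioc 0 x)).toReal)
        atTop (nhds (Real.exp (-(γ (Set.Ici x)).toReal))) := by
  
  intro x hx
  set q : ℕ → ℕ → ℝ := fun n j => (P n j (Set.Ici x)).toReal with hqdef
  set g : ℝ := (γ (Set.Ici x)).toReal with hgdef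
  have hg : 0 ≤ g := ENNReal.toReal_nonneg
  -- the key per-variable identity : P(Ioc 0 x) = 1 - P(Ici x)
  have key1 : ∀ n j, 1 ≤ j → j ≤ n →
      (P n j (Set.Ioc 0 x)).toReal = 1 - q n j := by
    intro n j hj1 hj2
    haveI := hPprob n j hj1 hj2
    have hIoi0 : P n j (Set.Ioi 0) = 1 := by
      rw [← Set.compl_Iic, measure_compl measurableSet_Iic (measure_ne_top _ _),
        hPpos n j hj1 hj2, measure_univ, tsub_zero]
    have hadd : P n j (Set.Ioc 0 x) + P n j (Set.Ioi x) = 1 := by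
      rw [← measure_union (Set.Ioc_disjoint_Ioi le_rfl) measurableSet_Ioi,
        Set.Ioc_union_Ioi_eq_Ioi hx.le, hIoi0]
    have hIoiIci : P n j (Set.Ioi x) = P n j (Set.Ici x) := by
      rw [← Set.Ici_sdiff_left]
      exact measure_diff_null (hPna n j hj1 hj2 x)
    have := congrArg ENNReal.toReal hadd
    rw [ENNReal.toReal_add (measure_ne_top _ _) (measure_ne_top _ _), hIoiIci,
      ENNReal.toReal_one] at this
    simp only [hqdef]
    linarith
  -- positivity of d n for n ≥ 1
  have hdn : ∀ n, 1 ≤ n → 0 < d n := by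
    intro n hn
    rw [hd]
    refine Finset.sum_pos (fun j hj => ?_) ⟨1, Finset.mem_Icc.mpr ⟨le_rfl, hn⟩⟩
    exact hc n j (Finset.mem_Icc.mp hj).1 (Finset.mem_Icc.mp hj).2
  have hsumc : ∀ n, 1 ≤ n → ∑ j ∈ Finset.Icc 1 n, c n j / d n = 1 := by
    intro n hn
    rw [← Finset.sum_div, ← hd, div_self (hdn n hn).ne']
  -- convergence of the sum of tail masses
  have hsum : Tendsto (fun n => ∑ j ∈ Finset.Icc 1 n, q n j) atTop (nhds g) := by
    rw [Metric.tendsto_atTop]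
    intro ε hε
    obtain ⟨N, hN⟩ := hunif x hx (ε / 2) (by positivity)
    refine ⟨max N 1, fun n hn => ?_⟩
    have hn1 : 1 ≤ n := le_of_max_le_right hn
    have hnN : N ≤ n := le_of_max_le_left hn
    have hdp := hdn n hn1
    rw [Real.dist_eq]
    have key : ∑ j ∈ Finset.Icc 1 n, q n j - g
        = ∑ j ∈ Finset.Icc 1 n, (c n j / d n) * (d n / c n j * q n j - g) := by
      have e1 : ∀ j ∈ Finset.Icc 1 n, (c n j / d n) * (d n / c n j * q n j - g)
          = q n j - (c n j / d n) * g := by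
        intro j hj
        obtain ⟨hj1, hj2⟩ := Finset.mem_Icc.mp hj
        have hcp := hc n j hj1 hj2
        field_simp
      rw [Finset.sum_congr rfl e1, Finset.sum_sub_distrib, ← Finset.sum_mul,
        hsumc n hn1, one_mul]
    calc |∑ j ∈ Finset.Icc 1 n, q n j - g|
        = |∑ j ∈ Finset.Icc 1 n, (c n j / d n) * (d n / c n j * q n j - g)| := by rw [key]
      _ ≤ ∑ j ∈ Finset.Icc 1 n, |(c n j / d n) * (d n / c n j * q n j - g)| :=
          Finset.abs_sum_le_sum_abs _ _
      _ ≤ ∑ j ∈ Finset.Icc 1 n, (c n j / d n) * (ε / 2) := by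
          refine Finset.sum_le_sum fun j hj => ?_
          obtain ⟨hj1, hj2⟩ := Finset.mem_Icc.mp hj
          have hcp := hc n j hj1 hj2
          rw [abs_mul, abs_of_nonneg (by positivity : (0:ℝ) ≤ c n j / d n)]
          exact mul_le_mul_of_nonneg_left (le_of_lt (hN n hnN j hj)) (by positivity)
      _ = ε / 2 := by rw [← Finset.sum_mul, hsumc n hn1, one_mul]
      _ < ε := by linarith
  -- uniform smallness of tail masses
  have hsmall : ∀ δ : ℝ, 0 < δ → ∀ᶠ n in atTop, ∀ j ∈ Finset.Icc 1 n, q n j ≤ δ := by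
    intro δ hδ
    obtain ⟨N1, hN1⟩ := hunif x hx 1 one_pos
    obtain ⟨N2, hN2⟩ := hmax (δ / (g + 1)) (by positivity)
    filter_upwards [eventually_ge_atTop (max N1 N2)] with n hn j hj
    obtain ⟨hj1, hj2⟩ := Finset.mem_Icc.mp hj
    have hdp := hdn n (hj1.trans hj2)
    have hcp := hc n j hj1 hj2
    have h1 := hN1 n (le_of_max_le_left hn) j hj
    have h2 := hN2 n (le_of_max_le_right hn) j hj
    have hb : d n / c n j * q n j < g + 1 := by
      have := abs_lt.mp h1
      linarith [this.2]
    have hq0 : 0 ≤ q n j := ENNReal.toReal_nonneg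
    have heq : q n j = (c n j / d n) * (d n / c n j * q n j) := by
      field_simp
    have ha : 0 < c n j / d n := by positivity
    have hbb : 0 ≤ d n / c n j * q n j := by positivity
    have : q n j < (δ / (g + 1)) * (g + 1) := by
      rw [heq]
      calc (c n j / d n) * (d n / c n j * q n j)
          ≤ (c n j / d n) * (g + 1) := mul_le_mul_of_nonneg_left hb.le ha.le
        _ < (δ / (g + 1)) * (g + 1) :=
            mul_lt_mul_of_pos_right h2 (by linarith)
    rw [div_mul_cancel₀ _ (by linarith : g + 1 ≠ 0)] at this
    exact this.le
  -- part 2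
  have part2 : Tendsto (fun n => ∏ j ∈ Finset.Icc 1 n, (P n j (Set.Ioc 0 x)).toReal)
      atTop (nhds (Real.exp (-g))) := by
    have := aux_prod_tendsto q g hg (fun n j _ => ENNReal.toReal_nonneg) hsum hsmall
    refine this.congr fun n => ?_
    refine Finset.prod_congr rfl fun j hj => ?_
    obtain ⟨hj1, hj2⟩ := Finset.mem_Icc.mp hj
    exact (key1 n j hj1 hj2).symm
  refine ⟨fun n => ?_, part2⟩
  -- part 1 : independence gives the product formula
  have hset : {ω | ∀ j ∈ Finset.Icc 1 n, X n j ω ≤ x}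
      = ⋂ i ∈ (Finset.univ : Finset ↥(Finset.Icc 1 n)), (X n i) ⁻¹' Set.Iic x := by
    ext ω
    simp only [Set.mem_setOf_eq, Set.mem_iInter, Set.mem_preimage, Set.mem_Iic,
      Finset.mem_univ, forall_true_left]
    exact ⟨fun h i => h i i.2, fun h j hj => h ⟨j, hj⟩⟩
  have hprod := (hindep n).measure_inter_preimage_eq_mul (S := Finset.univ)
    (sets := fun _ => Set.Iic x) (fun i _ => measurableSet_Iic)
  rw [hset, hprod, ENNReal.toReal_prod]
  rw [← Finset.prod_coe_sort (Finset.Icc 1 n) (fun j => (P n j (Set.Ioc 0 x)).toReal)]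
  refine Finset.prod_congr rfl fun i _ => ?_
  obtain ⟨hj1, hj2⟩ := Finset.mem_Icc.mp i.2
  show (Pr (X n ↑i ⁻¹' Set.Iic x)).toReal = (P n ↑i (Set.Ioc 0 x)).toReal
  have e : P n ↑i (Set.Iic x) = Pr (X n ↑i ⁻¹' Set.Iic x) := by
    rw [← hPdist n i hj1 hj2, Measure.map_apply (hXmeas n i hj1 hj2) measurableSet_Iic]
  have e2 : P n ↑i (Set.Ioc 0 x) = P n ↑i (Set.Iic x) := by
    rw [← Set.Iic_sdiff_Iic]
    exact measure_diff_null (hPpos n i hj1 hj2)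
  rw [e2, e]
end

section
/- Under the hypotheses H1* and H3 below, with r(x) = x^{−α} for some α > 0, the normalized maximum has a Fréchet limit: for every x > 0, P( d_n^{−1/α} · max_{1≤j≤n} X_j ≤ x ) = ∏_{j=1}^n F_j(d_n^{1/α} x) → exp( − x^{−α} ) as n → ∞. -/
open MeasureTheory Filter

/-- Under hypotheses H1* and H3 with `r(x) = x^{-α}`, the normalized maximum has
a Fréchet limit: for every `x > 0`,
`P(d_n^{-1/α} · max_{1≤j≤n} X_j ≤ x) = ∏_{j=1}^n F_j(d_n^{1/α} x) → exp(-x^{-α})`. -/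
theorem normalized_max_frechet_limit
    (Ω : Type*) [MeasurableSpace Ω] (Pr : Measure Ω) [IsProbabilityMeasure Pr]
    (X : ℕ → Ω → ℝ)
    (hXmeas : ∀ j, 1 ≤ j → Measurable (X j))
    (hXpos : ∀ j, 1 ≤ j → ∀ ω, 0 < X j ω)
    -- `X_1, X_2, …` are independent
    (hindep : ProbabilityTheory.iIndepFun
      (fun j : {j : ℕ // 1 ≤ j} => X j) Pr)
    -- `F j` is the distribution function of `X j`, strictly increasing and continuous,
    -- with `F j 0 = 0` and `F j x > 0` for `x > 0`
    (F : ℕ → ℝ → ℝ)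
    (hFdist : ∀ j, 1 ≤ j → ∀ x : ℝ, F j x = (Pr {ω | X j ω ≤ x}).toReal)
    (hFcont : ∀ j, 1 ≤ j → Continuous (F j))
    (hFmono : ∀ j, 1 ≤ j → StrictMonoOn (F j) (Set.Ici 0))
    (hF0 : ∀ j, 1 ≤ j → F j 0 = 0)
    (hFpos : ∀ j, 1 ≤ j → ∀ x : ℝ, 0 < x → 0 < F j x)
    -- H3 : `ν_j(x) = c_j x^{-α} (1 + δ_j(x))` with the stated bounds
    (α : ℝ) (hα : 0 < α)
    (c : ℕ → ℝ) (hc : ∀ j, 1 ≤ j → 0 < c j)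
    (δ : ℕ → ℝ → ℝ)
    (hδcont : ∀ j, 1 ≤ j → ContinuousOn (δ j) (Set.Ioi 0))
    (m M : ℝ) (hm0 : 0 < m) (hm1 : m < 1)
    (hδbdd : ∀ j, 1 ≤ j → ∀ x : ℝ, 0 < x → -m ≤ δ j x ∧ δ j x ≤ M)
    (hδunif : ∀ ε : ℝ, 0 < ε → ∃ x₀ : ℝ, ∀ x : ℝ, x₀ ≤ x → ∀ j, 1 ≤ j → |δ j x| < ε)
    (hH3 : ∀ j, 1 ≤ j → ∀ x : ℝ, 0 < x →
      F j x = Real.exp (-(c j * x ^ (-α) * (1 + δ j x))))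
    -- H1* : `d n → ∞`, `(max_{j ≤ n} c j) / d n → 0`
    (d : ℕ → ℝ)
    (hd : ∀ n, d n = ∑ j ∈ Finset.Icc 1 n, c j)
    (hdtop : Tendsto d atTop atTop)
    (hmax : ∀ ε : ℝ, 0 < ε → ∃ N, ∀ n ≥ N, ∀ j ∈ Finset.Icc 1 n, c j / d n < ε)
    -- H1* : the measures `μ_n = ∑_j (c j / d n) δ_{j/n}` converge weakly to `μ`
    (μ : Measure ℝ)
    (hμsupp : μ ((Set.Icc (0:ℝ) 1)ᶜ) = 0)
    (hweak : ∀ f : ℝ → ℝ, Continuous f → (∃ C, ∀ x, |f x| ≤ C) →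
      Tendsto (fun n => ∫ x, f x ∂(∑ j ∈ Finset.Icc 1 n,
          ENNReal.ofReal (c j / d n) • Measure.dirac ((j : ℝ) / (n : ℝ))))
        atTop (nhds (∫ x, f x ∂μ))) :
    ∀ x : ℝ, 0 < x →
      (∀ n : ℕ, 1 ≤ n →
        (Pr {ω | ∀ j ∈ Finset.Icc 1 n, (d n) ^ (-(1/α)) * X j ω ≤ x}).toReal
          = ∏ j ∈ Finset.Icc 1 n, F j ((d n) ^ (1/α) * x)) ∧
      Tendsto (fun n : ℕ => ∏ j ∈ Finset.Icc 1 n, F j ((d n) ^ (1/α) * x))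
        atTop (nhds (Real.exp (-(x ^ (-α))))) := by
  intro x hx
  -- positivity of d n for n ≥ 1
  have dpos : ∀ n : ℕ, 1 ≤ n → 0 < d n := by
    intro n hn
    rw [hd]
    apply Finset.sum_pos
    · intro j hj
      exact hc j (Finset.mem_Icc.mp hj).1
    · exact ⟨1, Finset.mem_Icc.mpr ⟨le_refl 1, hn⟩⟩
  -- the scaled point
  set y : ℕ → ℝ := fun n => (d n) ^ (1/α) * x with hy
  have ypos : ∀ n : ℕ, 1 ≤ n → 0 < y n := by
    intro n hn
    exact mul_pos (Real.rpow_pos_of_pos (dpos n hn) _) hx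
  -- the weighted sums of δ's
  set g : ℕ → ℝ := fun n => ∑ j ∈ Finset.Icc 1 n, (c j / d n) * δ j (y n) with hg
  have hsum1 : ∀ n : ℕ, 1 ≤ n → ∑ j ∈ Finset.Icc 1 n, c j / d n = 1 := by
    intro n hn
    rw [← Finset.sum_div, ← hd n, div_self (dpos n hn).ne']
  -- key product formula
  have hprod : ∀ n : ℕ, 1 ≤ n →
      ∏ j ∈ Finset.Icc 1 n, F j (y n) = Real.exp (-(x ^ (-α) * (1 + g n))) := by
    intro n hn
    have hrpow : (y n) ^ (-α) = (d n)⁻¹ * x ^ (-α) := by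
      show ((d n) ^ (1/α) * x) ^ (-α) = (d n)⁻¹ * x ^ (-α)
      rw [Real.mul_rpow (Real.rpow_pos_of_pos (dpos n hn) _).le hx.le,
        ← Real.rpow_mul (dpos n hn).le,
        show (1/α) * (-α) = -1 by field_simp, Real.rpow_neg_one]
    have : ∀ j ∈ Finset.Icc 1 n, F j (y n)
        = Real.exp (-(c j * ((d n)⁻¹ * x ^ (-α)) * (1 + δ j (y n)))) := by
      intro j hj
      rw [hH3 j (Finset.mem_Icc.mp hj).1 (y n) (ypos n hn), hrpow]
    rw [Finset.prod_congr rfl this, ← Real.exp_sum]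
    congr 1
    have hdn' : d n ≠ 0 := (dpos n hn).ne'
    have hterm : ∀ j ∈ Finset.Icc 1 n,
        -(c j * ((d n)⁻¹ * x ^ (-α)) * (1 + δ j (y n)))
        = -(x ^ (-α)) * (c j / d n + (c j / d n) * δ j (y n)) := by
      intro j hj; rw [div_eq_mul_inv]; ring
    rw [Finset.sum_congr rfl hterm, ← Finset.mul_sum, Finset.sum_add_distrib,
      hsum1 n hn]
    simp only [hg]
    ring
  -- g n → 0
  have hytop : Tendsto y atTop atTop := by
    apply Tendsto.atTop_mul_const hx
    exact ((tendsto_rpow_atTop (by positivity : (0:ℝ) < 1/α)).comp hdtop)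
  have hg0 : Tendsto g atTop (nhds 0) := by
    rw [NormedAddCommGroup.tendsto_nhds_zero]
    intro ε hε
    obtain ⟨x₀, hx₀⟩ := hδunif ε hε
    filter_upwards [hytop.eventually_ge_atTop x₀, eventually_ge_atTop 1] with n hyn hn
    have habs : |g n| ≤ ∑ j ∈ Finset.Icc 1 n, (c j / d n) * |δ j (y n)| := by
      refine (Finset.abs_sum_le_sum_abs _ _).trans (le_of_eq ?_)
      refine Finset.sum_congr rfl fun j hj => ?_
      rw [abs_mul, abs_of_nonneg
        (div_pos (hc j (Finset.mem_Icc.mp hj).1) (dpos n hn)).le]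
    have hlt : ∑ j ∈ Finset.Icc 1 n, (c j / d n) * |δ j (y n)|
        < ∑ j ∈ Finset.Icc 1 n, (c j / d n) * ε := by
      apply Finset.sum_lt_sum_of_nonempty ⟨1, Finset.mem_Icc.mpr ⟨le_refl 1, hn⟩⟩
      intro j hj
      have hcj := hc j (Finset.mem_Icc.mp hj).1
      exact mul_lt_mul_of_pos_left (hx₀ (y n) hyn j (Finset.mem_Icc.mp hj).1)
        (div_pos hcj (dpos n hn))
    rw [show ∀ a : ℝ, ‖a‖ = |a| from fun a => rfl]
    calc |g n| ≤ _ := habs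
      _ < _ := hlt
      _ = ε := by rw [← Finset.sum_mul, hsum1 n hn, one_mul]
  constructor
  · -- Part 1: product formula from independence
    intro n hn
    have hdn := dpos n hn
    have hp : (0:ℝ) < (d n) ^ (1/α) := Real.rpow_pos_of_pos hdn _
    -- rewrite the event as an intersection
    have hset : {ω | ∀ j ∈ Finset.Icc 1 n, (d n) ^ (-(1/α)) * X j ω ≤ x}
        = ⋂ j ∈ Finset.Icc 1 n, (X j) ⁻¹' Set.Iic (y n) := by
      ext ω
      simp only [Set.mem_setOf_eq, Set.mem_iInter, Set.mem_preimage, Set.mem_Iic]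
      have key : ∀ t : ℝ, ((d n) ^ (-(1/α)) * t ≤ x ↔ t ≤ y n) := by
        intro t
        rw [Real.rpow_neg hdn.le,
          show (d n ^ (1/α))⁻¹ * t = t / (d n ^ (1/α)) by ring,
          div_le_iff₀ hp,
          show y n = x * d n ^ (1/α) from mul_comm _ _]
      exact ⟨fun h j hj => (key _).mp (h j hj), fun h j hj => (key _).mpr (h j hj)⟩
    -- index set over the subtype
    set S : Finset {j : ℕ // 1 ≤ j} := (Finset.Icc 1 n).subtype (1 ≤ ·) with hS
    have hsetS : (⋂ j ∈ Finset.Icc 1 n, (X j) ⁻¹' Set.Iic (y n))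
        = ⋂ i ∈ S, (X (i : ℕ)) ⁻¹' Set.Iic (y n) := by
      ext ω
      simp only [Set.mem_iInter, hS, Finset.mem_subtype]
      constructor
      · rintro h ⟨j, hj1⟩ hj; exact h j hj
      · intro h j hj
        exact h ⟨j, (Finset.mem_Icc.mp hj).1⟩ hj
    have hmeas : Pr (⋂ i ∈ S, (X (i : ℕ)) ⁻¹' Set.Iic (y n))
        = ∏ i ∈ S, Pr ((X (i : ℕ)) ⁻¹' Set.Iic (y n)) := by
      exact hindep.meas_biInter (fun i hi =>
        ⟨Set.Iic (y n), measurableSet_Iic, rfl⟩)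
    have hprodS : ∏ i ∈ S, (Pr ((X (i : ℕ)) ⁻¹' Set.Iic (y n))).toReal
        = ∏ j ∈ Finset.Icc 1 n, (Pr ((X j) ⁻¹' Set.Iic (y n))).toReal := by
      exact Finset.prod_subtype_of_mem
        (fun j => (Pr ((X j) ⁻¹' Set.Iic (y n))).toReal)
        (fun j hj => (Finset.mem_Icc.mp hj).1)
    rw [hset, hsetS, hmeas, ENNReal.toReal_prod, hprodS]
    refine Finset.prod_congr rfl fun j hj => ?_
    rw [hFdist j (Finset.mem_Icc.mp hj).1]
    rfl
  · -- Part 2: convergence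
    have hlim : Tendsto (fun n => Real.exp (-(x ^ (-α) * (1 + g n)))) atTop
        (nhds (Real.exp (-(x ^ (-α))))) := by
      have h1 : Tendsto (fun n => -(x ^ (-α) * (1 + g n))) atTop
          (nhds (-(x ^ (-α)))) := by
        have h2 : Tendsto (fun n => 1 + g n) atTop (nhds (1 + 0)) :=
          hg0.const_add 1
        have := ((h2.const_mul (x ^ (-α))).neg)
        simpa using this
      exact (Real.continuous_exp.tendsto _).comp h1
    refine hlim.congr' ?_
    filter_upwards [eventually_ge_atTop 1] with n hn
    exact (hprod n hn).symm
end

section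
/- (Scaled-tail regular variation of the triangular array of Section 4.) Under hypothesis H3 below with r(x) = x^{−α}, and assuming d_n := Σ_{j=1}^n c_j → ∞ and (max_{j≤n} c_j)/d_n → 0, the normalized tails converge to x^{−α} uniformly in j ≤ n and in x on half-lines: for every a > 0, sup_{1≤j≤n} sup_{x≥a} | x^{α} · (d_n/c_j) · (1 − F_j(d_n^{1/α} x)) − 1 | → 0 as n → ∞. -/
open MeasureTheory Filter

set_option maxHeartbeats 1600000 in
/-- (Scaled-tail regular variation of the triangular array.) Under hypothesis H3
with `r(x) = x^{-α}`, and assuming `d_n → ∞` and `(max_{j≤n} c_j)/d_n → 0`, the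
normalized tails converge to `x^{-α}` uniformly in `j ≤ n` and in `x` on
half-lines: for every `a > 0`,
`sup_{1≤j≤n} sup_{x≥a} |x^α (d_n/c_j)(1 - F_j(d_n^{1/α} x)) - 1| → 0`. -/
theorem scaled_tail_regular_variation
    (Ω : Type*) [MeasurableSpace Ω] (Pr : Measure Ω) [IsProbabilityMeasure Pr]
    (X : ℕ → Ω → ℝ)
    (hXmeas : ∀ j, 1 ≤ j → Measurable (X j))
    (hXpos : ∀ j, 1 ≤ j → ∀ ω, 0 < X j ω)
    -- `X_1, X_2, …` are independent
    (hindep : ProbabilityTheory.iIndepFun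
      (fun j : {j : ℕ // 1 ≤ j} => X j) Pr)
    -- `F j` is the distribution function of `X j`, continuous,
    -- with `F j 0 = 0` and `F j x > 0` for `x > 0`
    (F : ℕ → ℝ → ℝ)
    (hFdist : ∀ j, 1 ≤ j → ∀ x : ℝ, F j x = (Pr {ω | X j ω ≤ x}).toReal)
    (hFcont : ∀ j, 1 ≤ j → Continuous (F j))
    (hF0 : ∀ j, 1 ≤ j → F j 0 = 0)
    (hFpos : ∀ j, 1 ≤ j → ∀ x : ℝ, 0 < x → 0 < F j x)
    -- H3 : `ν_j(x) = c_j x^{-α} (1 + δ_j(x))` with the stated bounds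
    (α : ℝ) (hα : 0 < α)
    (c : ℕ → ℝ) (hc : ∀ j, 1 ≤ j → 0 < c j)
    (δ : ℕ → ℝ → ℝ)
    (hδcont : ∀ j, 1 ≤ j → ContinuousOn (δ j) (Set.Ioi 0))
    (m M : ℝ) (hm0 : 0 < m) (hm1 : m < 1)
    (hδbdd : ∀ j, 1 ≤ j → ∀ x : ℝ, 0 < x → -m ≤ δ j x ∧ δ j x ≤ M)
    (hδunif : ∀ ε : ℝ, 0 < ε → ∃ x₀ : ℝ, ∀ x : ℝ, x₀ ≤ x → ∀ j, 1 ≤ j → |δ j x| < ε)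
    (hH3 : ∀ j, 1 ≤ j → ∀ x : ℝ, 0 < x →
      F j x = Real.exp (-(c j * x ^ (-α) * (1 + δ j x))))
    -- H1* : `d n → ∞`, `(max_{j ≤ n} c j) / d n → 0`
    (d : ℕ → ℝ)
    (hd : ∀ n, d n = ∑ j ∈ Finset.Icc 1 n, c j)
    (hdtop : Tendsto d atTop atTop)
    (hmax : ∀ ε : ℝ, 0 < ε → ∃ N, ∀ n ≥ N, ∀ j ∈ Finset.Icc 1 n, c j / d n < ε)
    :    ∀ a : ℝ, 0 < a → ∀ ε : ℝ, 0 < ε → ∃ N, ∀ n ≥ N, ∀ j, 1 ≤ j → j ≤ n →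
      ∀ x : ℝ, a ≤ x →
        |x ^ α * (d n / c j) * (1 - F j ((d n) ^ (1/α) * x)) - 1| < ε := by

  intro a ha ε hε
  have hM1 : (0:ℝ) < 1 + M := by
    have h1 := hδbdd 1 le_rfl 1 one_pos
    linarith [h1.1, h1.2]
  have haα : (0:ℝ) < a ^ α := Real.rpow_pos_of_pos ha α
  set ε₂ : ℝ := ε * a ^ α / (2 * (1 + M) ^ 2) with hε₂def
  have hε₂ : 0 < ε₂ := by positivity
  obtain ⟨x₀, hx₀⟩ := hδunif (ε/2) (by linarith)
  obtain ⟨N₂, hN₂⟩ := hmax ε₂ hε₂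
  have htend : Tendsto (fun n => (d n) ^ (1/α) * a) atTop atTop :=
    ((tendsto_rpow_atTop (by positivity : (0:ℝ) < 1/α)).comp hdtop).atTop_mul_const ha
  obtain ⟨N₁, hN₁⟩ := Filter.eventually_atTop.mp (htend.eventually_ge_atTop x₀)
  obtain ⟨N₀, hN₀⟩ := Filter.eventually_atTop.mp (hdtop.eventually_ge_atTop 1)
  refine ⟨max (max N₀ N₁) N₂, ?_⟩
  intro n hn j hj1 hjn x hx
  have hn0 : N₀ ≤ n := le_trans (le_trans (le_max_left _ _) (le_max_left _ _)) hn
  have hn1 : N₁ ≤ n := le_trans (le_trans (le_max_right _ _) (le_max_left _ _)) hn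
  have hn2 : N₂ ≤ n := le_trans (le_max_right _ _) hn
  have hdn1 : (1:ℝ) ≤ d n := hN₀ n hn0
  have hdn : 0 < d n := lt_of_lt_of_le one_pos hdn1
  have hcj : 0 < c j := hc j hj1
  have hx0 : 0 < x := lt_of_lt_of_le ha hx
  have hdnr : 0 < (d n) ^ (1/α) := Real.rpow_pos_of_pos hdn _
  set y := (d n) ^ (1/α) * x with hy
  have hy0 : 0 < y := mul_pos hdnr hx0
  have hyx₀ : x₀ ≤ y := by
    have h2 := mul_le_mul_of_nonneg_left hx hdnr.le
    have h3 := hN₁ n hn1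
    calc x₀ ≤ (d n) ^ (1/α) * a := h3
    _ ≤ y := h2
  set δx := δ j y with hδx_def
  have hδx : |δx| < ε/2 := hx₀ y hyx₀ j hj1
  have hδb := hδbdd j hj1 y hy0
  set s := c j / d n * x ^ (-α) with hs_def
  have hxα : 0 < x ^ (-α) := Real.rpow_pos_of_pos hx0 _
  have hs : 0 < s := by positivity
  have hyα : y ^ (-α) = (d n)⁻¹ * x ^ (-α) := by
    rw [hy, Real.mul_rpow hdnr.le hx0.le, ← Real.rpow_mul hdn.le,
      show (1/α) * (-α) = -1 by field_simp, Real.rpow_neg_one]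
  set t := s * (1 + δx) with ht_def
  have h1δ : (0:ℝ) < 1 + δx := by linarith [hδb.1]
  have ht0 : 0 ≤ t := (mul_pos hs h1δ).le
  have hFval : F j y = Real.exp (-t) := by
    rw [hH3 j hj1 y hy0]
    congr 1
    rw [hyα, ht_def, hs_def]
    ring
  have hup : 1 - Real.exp (-t) ≤ t := by nlinarith [Real.add_one_le_exp (-t)]
  have hlo : t - t^2 ≤ 1 - Real.exp (-t) := by
    have h2 : (1+t) ≤ Real.exp t := by linarith [Real.add_one_le_exp t]
    have h3 : Real.exp (-t) * (1+t) ≤ Real.exp (-t) * Real.exp t :=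
      mul_le_mul_of_nonneg_left h2 (Real.exp_pos _).le
    rw [← Real.exp_add, neg_add_cancel, Real.exp_zero] at h3
    nlinarith [Real.exp_pos (-t), h3, ht0, mul_nonneg (mul_nonneg ht0 ht0) ht0]
  have hcd : c j / d n < ε₂ := hN₂ n hn2 j (Finset.mem_Icc.mpr ⟨hj1, hjn⟩)
  have hxa : x ^ (-α) ≤ a ^ (-α) := Real.rpow_le_rpow_of_nonpos ha hx (by linarith)
  have haa : a ^ α * a ^ (-α) = 1 := by
    rw [← Real.rpow_add ha]; simp
  have haα' : 0 < a ^ (-α) := Real.rpow_pos_of_pos ha _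
  have hsmall : s * (1+M)^2 < ε/2 := by
    have h4 : s ≤ c j / d n * a ^ (-α) :=
      mul_le_mul_of_nonneg_left hxa (div_pos hcj hdn).le
    have hpos : (0:ℝ) < a^(-α) * (1+M)^2 := by positivity
    have h5 : c j / d n * (a ^ (-α) * (1+M)^2) < ε₂ * (a^(-α) * (1+M)^2) :=
      mul_lt_mul_of_pos_right hcd hpos
    have h4' : s * (1+M)^2 ≤ c j / d n * a ^ (-α) * (1+M)^2 :=
      mul_le_mul_of_nonneg_right h4 (by positivity)
    have h6 : ε₂ * a^(-α) * (1+M)^2 = ε/2 := by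
      have hM2 : ((1:ℝ)+M)^2 ≠ 0 := by positivity
      calc ε₂ * a^(-α) * (1+M)^2
          = ε * (a^α * a^(-α)) * (1+M)^2 / (2*(1+M)^2) := by rw [hε₂def]; ring
        _ = ε * (1+M)^2 / (2*(1+M)^2) := by rw [haa, mul_one]
        _ = ε/2 := by field_simp
    linarith [h4', h5, h6]
  have hsq : (1+δx)^2 ≤ (1+M)^2 := pow_le_pow_left₀ h1δ.le (by linarith [hδb.2]) 2
  have hu : s * (1+δx)^2 < ε/2 := by
    have h8 : s * (1+δx)^2 ≤ s * (1+M)^2 := mul_le_mul_of_nonneg_left hsq hs.le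
    linarith
  obtain ⟨hδl, hδr⟩ := abs_lt.mp hδx
  have hinv : x ^ α * (d n / c j) = s⁻¹ := by
    rw [hs_def, Real.rpow_neg hx0.le, mul_inv, inv_inv, inv_div]
    ring
  rw [hFval, hinv, abs_lt]
  have ht2 : t^2 = s * (s * (1+δx)^2) := by rw [ht_def]; ring
  constructor
  · have key : (1-ε)*s < 1 - Real.exp (-t) := by
      have h11 : s * (-(ε/2)) < s * δx := mul_lt_mul_of_pos_left hδl hs
      have h12 : s * (s * (1+δx)^2) < s * (ε/2) := mul_lt_mul_of_pos_left hu hs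
      linarith [hlo, h11, h12, ht2]
    have h9 := mul_lt_mul_of_pos_left key (inv_pos.mpr hs)
    have h10 : s⁻¹ * ((1-ε)*s) = 1-ε := by
      rw [mul_comm (1-ε) s, ← mul_assoc, inv_mul_cancel₀ hs.ne', one_mul]
    rw [h10] at h9
    linarith
  · have key2 : 1 - Real.exp (-t) < (1+ε)*s := by
      have h10 : s * δx < s * ε := mul_lt_mul_of_pos_left (by linarith) hs
      linarith [hup, h10]
    have h9 := mul_lt_mul_of_pos_left key2 (inv_pos.mpr hs)
    have h10 : s⁻¹ * ((1+ε)*s) = 1+ε := by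
      rw [mul_comm (1+ε) s, ← mul_assoc, inv_mul_cancel₀ hs.ne', one_mul]
    rw [h10] at h9
    linarith
end
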